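/- If C is a monoidal category, then the Day convolution product F ⊗_D G, defined by (F ⊗_D G)(c) = ∫^{(c₀,c₁)} F(c₀) × G(c₁) × Hom_C(c₀ ⊗ c₁, c), together with unit I_D = Hom_C(I, -), makes the copresheaf category [C ⥤ Type] into a monoidal category. -/

import Mathlib

open CategoryTheory Opposite

universe u v

namespace DayPaper

variable {B C : Type} [SmallCategory B] [SmallCategory C]

/-- A point of the coend defining the Day extension (left Kan extension) of a
copresheaf `P` along `θ`, at `c`. -/
structure DayPt (θ : B ⥤ C) (P : B ⥤ Type) (c : C) : Type where
  pt : B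
  elt : P.obj pt
  arr : θ.obj pt ⟶ c

/-- The relation generating the coend quotient. -/
def DayRel (θ : B ⥤ C) (P : B ⥤ Type) (c : C) : DayPt θ P c → DayPt θ P c → Prop :=
  fun x y => ∃ f : x.pt ⟶ y.pt, P.map f x.elt = y.elt ∧ x.arr = θ.map f ≫ y.arr

/-- The coend `∫^{b} P(b) × Hom(θ b, c)`. -/
def DayObj (θ : B ⥤ C) (P : B ⥤ Type) (c : C) : Type := Quot (DayRel θ P c)

/-- The Day extension of a copresheaf `P` along `θ`, as a copresheaf on `C`. -/
def DayCopresheaf (θ : B ⥤ C) (P : B ⥤ Type) : C ⥤ Type where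
  obj c := DayObj θ P c
  map {c c'} g := TypeCat.ofHom (Quot.map (fun x => ⟨x.pt, x.elt, x.arr ≫ g⟩)
    (by rintro x y ⟨f, h1, h2⟩; exact ⟨f, h1, by dsimp; rw [h2, Category.assoc]⟩))
  map_id c := by
    ext q
    induction q using Quot.ind with
    | _ x => exact congrArg (Quot.mk _) (by rcases x with ⟨b, p, a⟩; simp)
  map_comp {c c' c''} g g' := by
    ext q
    induction q using Quot.ind with
    | _ x => exact congrArg (Quot.mk _) (by rcases x with ⟨b, p, a⟩; simp)

/-- The Day extension, as a functor on copresheaf categories. -/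
def DayExtGen (θ : B ⥤ C) : (B ⥤ Type) ⥤ (C ⥤ Type) where
  obj P := DayCopresheaf θ P
  map {P Q} η :=
    { app := fun c => TypeCat.ofHom (Quot.map (fun x => ⟨x.pt, η.app x.pt x.elt, x.arr⟩)
        (by
          rintro x y ⟨f, h1, h2⟩
          exact ⟨f, by dsimp; rw [← h1, FunctorToTypes.naturality], h2⟩))
      naturality := by
        intro c c' g
        ext q
        induction q using Quot.ind with
        | _ x => rfl }
  map_id P := by
    ext c q
    induction q using Quot.ind with
    | _ x => rfl
  map_comp {P Q R} η η' := by
    ext c q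
    induction q using Quot.ind with
    | _ x => rfl

variable {ι : Type}

/-- The external product of a family of copresheaves. -/
def extProd (F : ι → (C ⥤ Type)) : (ι → C) ⥤ Type where
  obj x := ∀ i, (F i).obj (x i)
  map f := TypeCat.ofHom fun p => fun i => (F i).map (f i) (p i)
  map_id x := by ext p i; simp
  map_comp f g := by ext p i; simp

/-- The external product, as a functor. -/
def extProdFunctor (ι : Type) (C : Type) [SmallCategory C] :
    (ι → (C ⥤ Type)) ⥤ ((ι → C) ⥤ Type) where
  obj := extProd
  map {F G} α :=
    { app := fun x => TypeCat.ofHom fun p => fun i => (α i).app (x i) (p i)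
      naturality := by
        intro x y f
        ext p
        funext i
        exact NatTrans.naturality_apply (α i) (f i) (p i) }
  map_id F := by ext x p; rfl
  map_comp α β := by ext x p; rfl

/-- Reindexing of pi-categories along a map of index types. -/
def reindexPi {A : Type u} [Category.{v} A] {ι' ι : Type} (h : ι' → ι) :
    (ι → A) ⥤ (ι' → A) where
  obj x := fun i' => x (h i')
  map f := fun i' => f (h i')
  map_id _x := rfl
  map_comp _f _g := rfl

/-- The tuple `(θ₁, …, θₙ)` of a family of multi-ary operations. -/
def tupleFunctor {κ : ι → Type} (θs : ∀ i, (κ i → C) ⥤ C) :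
    ((Σ i, κ i) → C) ⥤ (ι → C) where
  obj x := fun i => (θs i).obj (fun s => x ⟨i, s⟩)
  map f := fun i => (θs i).map (fun s => f ⟨i, s⟩)
  map_id x := by funext i; exact (θs i).map_id _
  map_comp f g := by funext i; exact (θs i).map_comp _ _

/-- Multi-composition of multi-ary operations on `C`. -/
def mc {κ : ι → Type} (θ : (ι → C) ⥤ C) (θs : ∀ i, (κ i → C) ⥤ C) :
    ((Σ i, κ i) → C) ⥤ C :=
  tupleFunctor θs ⋙ θ

/-- The Day extension of a (total) `ι`-ary operation. -/
def DayExtFunctor (θ : (ι → C) ⥤ C) : (ι → (C ⥤ Type)) ⥤ (C ⥤ Type) :=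
  extProdFunctor ι C ⋙ DayExtGen θ

end DayPaper

open DayPaper CategoryTheory MonoidalCategory Opposite

/-- The tensor product of a monoidal category, as a functor `C × C ⥤ C`. -/
def tensorBifunctor (C : Type) [SmallCategory C] [MonoidalCategory C] :
    C × C ⥤ C where
  obj p := p.1 ⊗ p.2
  map f := f.1 ⊗ₘ f.2
  map_id p := by simp
  map_comp f g := by simp [CategoryTheory.MonoidalCategory.tensorHom_comp_tensorHom]

/-- The external product of two copresheaves. -/
def pairProd {C : Type} [SmallCategory C] (F G : C ⥤ Type) : C × C ⥤ Type where
  obj p := F.obj p.1 × G.obj p.2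
  map f := TypeCat.ofHom fun x => (F.map f.1 x.1, G.map f.2 x.2)
  map_id p := by ext x <;> simp
  map_comp f g := by ext x <;> simp

/-- The Day convolution of two copresheaves:
`(F ⊗_D G)(c) = ∫^{(c₀,c₁)} F(c₀) × G(c₁) × Hom(c₀ ⊗ c₁, c)`. -/
def dayTensor {C : Type} [SmallCategory C] [MonoidalCategory C]
    (F G : C ⥤ Type) : C ⥤ Type :=
  DayCopresheaf (tensorBifunctor C) (pairProd F G)

namespace DayProofAux

variable {C : Type} [SmallCategory C] [MonoidalCategory C]

def dmk {F G : C ⥤ Type} {a b c : C} (x : F.obj a) (y : G.obj b) (f : a ⊗ b ⟶ c) :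
    (dayTensor F G).obj c :=
  Quot.mk _ ⟨(a, b), (x, y), f⟩

theorem dmk_ind {F G : C ⥤ Type} {c : C} {motive : (dayTensor F G).obj c → Prop}
    (h : ∀ (a b : C) (x : F.obj a) (y : G.obj b) (f : a ⊗ b ⟶ c), motive (dmk x y f))
    (q : (dayTensor F G).obj c) : motive q := by
  refine Quot.ind ?_ q
  rintro ⟨⟨a, b⟩, ⟨x, y⟩, f⟩
  exact h a b x y f

theorem map_dmk {F G : C ⥤ Type} {a b c c' : C} (x : F.obj a) (y : G.obj b)
    (f : a ⊗ b ⟶ c) (g : c ⟶ c') :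
    (dayTensor F G).map g (dmk x y f) = dmk x y (f ≫ g) := rfl

theorem dmk_eq {F G : C ⥤ Type} {a a' b b' c : C} (g₁ : a ⟶ a') (g₂ : b ⟶ b')
    (x : F.obj a) (y : G.obj b) {f : a ⊗ b ⟶ c} {f' : a' ⊗ b' ⟶ c}
    (h : f = (g₁ ⊗ₘ g₂) ≫ f') :
    dmk x y f = dmk (F.map g₁ x) (G.map g₂ y) f' := by
  subst h; exact Quot.sound ⟨(g₁, g₂), rfl, rfl⟩

theorem dmk_eq₂ {F G : C ⥤ Type} {a a' b b' c : C} (g₁ : a ⟶ a') (g₂ : b ⟶ b')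
    {x : F.obj a} {y : G.obj b} {x' : F.obj a'} {y' : G.obj b'}
    {f : a ⊗ b ⟶ c} {f' : a' ⊗ b' ⟶ c}
    (h : f = (g₁ ⊗ₘ g₂) ≫ f') (hx : F.map g₁ x = x') (hy : G.map g₂ y = y') :
    dmk x y f = dmk x' y' f' := by
  subst hx hy; exact dmk_eq g₁ g₂ x y h


def dHom {F F' G G' : C ⥤ Type} (η : F ⟶ F') (ε : G ⟶ G') : dayTensor F G ⟶ dayTensor F' G' where
  app c := TypeCat.ofHom (Quot.map
    (fun w => ⟨w.pt, (η.app w.pt.1 w.elt.1, ε.app w.pt.2 w.elt.2), w.arr⟩)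
    (by
      rintro ⟨⟨a, b⟩, ⟨x, y⟩, f⟩ ⟨⟨a', b'⟩, ⟨x', y'⟩, f'⟩ ⟨⟨g₁, g₂⟩, he, ha⟩
      obtain ⟨h1, h2⟩ := Prod.ext_iff.mp he
      clear he
      change F.map g₁ x = x' at h1
      change G.map g₂ y = y' at h2
      dsimp [pairProd, TypeCat.Fun.mk_apply] at g₁ g₂ h1 h2 ha ⊢
      rw [← h1, ← h2]
      refine ⟨(g₁, g₂), ?_, ha⟩
      dsimp [pairProd]
      simp [FunctorToTypes.naturality]))
  naturality c c' g := by
    ext q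
    induction q using dmk_ind with
    | h a b x y f => rfl

@[simp] theorem dHom_app_dmk {F F' G G' : C ⥤ Type} (η : F ⟶ F') (ε : G ⟶ G')
    {a b c : C} (x : F.obj a) (y : G.obj b) (f : a ⊗ b ⟶ c) :
    (dHom η ε).app c (dmk x y f) = dmk (η.app a x) (ε.app b y) f := rfl

theorem dHom_id (F G : C ⥤ Type) : dHom (𝟙 F) (𝟙 G) = 𝟙 (dayTensor F G) := by
  ext c q
  induction q using dmk_ind with
  | h a b x y f => rfl

theorem dHom_comp {F F' F'' G G' G'' : C ⥤ Type} (η : F ⟶ F') (η' : F' ⟶ F'')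
    (ε : G ⟶ G') (ε' : G' ⟶ G'') :
    dHom (η ≫ η') (ε ≫ ε') = dHom η ε ≫ dHom η' ε' := by
  ext c q
  induction q using dmk_ind with
  | h a b x y f => rfl

abbrev dayUnit (C : Type) [SmallCategory C] [MonoidalCategory C] : C ⥤ Type :=
  coyoneda.obj (op (𝟙_ C))

def dLeftUnitorHom (G : C ⥤ Type) : dayTensor (dayUnit C) G ⟶ G where
  app c := TypeCat.ofHom (Quot.lift
    (fun w => G.map ((λ_ w.pt.2).inv ≫ (w.elt.1 ▷ w.pt.2) ≫ w.arr) w.elt.2)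
    (by
      rintro ⟨⟨a, b⟩, ⟨u, y⟩, f⟩ ⟨⟨a', b'⟩, ⟨u', y'⟩, f'⟩ ⟨⟨g₁, g₂⟩, he, ha⟩
      obtain ⟨h1, h2⟩ := Prod.ext_iff.mp he
      clear he
      change (dayUnit C).map g₁ u = u' at h1
      change G.map g₂ y = y' at h2
      dsimp [pairProd, TypeCat.Fun.mk_apply] at g₁ g₂ h1 h2 ha ⊢
      rw [← h1, ← h2]
      change _ ⊗ _ ⟶ _ at f f'
      subst ha
      rw [← FunctorToTypes.map_comp_apply]
      congr 1
      dsimp [tensorBifunctor]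
      rw [leftUnitor_inv_naturality_assoc]
      simp only [MonoidalCategory.tensorHom_def, Category.assoc, whisker_exchange_assoc, comp_whiskerRight]))
  naturality c c' g := by
    ext q
    induction q using dmk_ind with
    | h a b u y f =>
      show G.map ((λ_ b).inv ≫ (u ▷ b) ≫ (f ≫ g)) y = G.map g (G.map ((λ_ b).inv ≫ (u ▷ b) ≫ f) y)
      rw [← FunctorToTypes.map_comp_apply]
      congr 1
      simp

def dLeftUnitorInv (G : C ⥤ Type) : G ⟶ dayTensor (dayUnit C) G where
  app c := TypeCat.ofHom fun y => dmk (𝟙 (𝟙_ C)) y (λ_ c).hom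
  naturality c c' g := by
    ext y
    show dmk (F := dayUnit C) (G := G) (𝟙 (𝟙_ C)) (G.map g y) (λ_ c').hom = dmk (F := dayUnit C) (G := G) (𝟙 (𝟙_ C)) y ((λ_ c).hom ≫ g)
    refine (dmk_eq₂ (𝟙 (𝟙_ C)) g ?_ ?_ rfl).symm
    · simp
    · simp [dayUnit]

def dLeftUnitor (G : C ⥤ Type) : dayTensor (dayUnit C) G ≅ G where
  hom := dLeftUnitorHom G
  inv := dLeftUnitorInv G
  hom_inv_id := by
    ext c q
    induction q using dmk_ind with
    | h a b u y f =>
      show dmk (F := dayUnit C) (G := G) (𝟙 (𝟙_ C)) (G.map ((λ_ b).inv ≫ (u ▷ b) ≫ f) y) (λ_ c).hom = dmk u y f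
      have h1 : dmk (F := dayUnit C) (G := G) (𝟙 (𝟙_ C)) y ((u ▷ b) ≫ f)
          = dmk (𝟙 (𝟙_ C)) (G.map ((λ_ b).inv ≫ (u ▷ b) ≫ f) y) (λ_ c).hom := by
        refine dmk_eq₂ (𝟙 (𝟙_ C)) ((λ_ b).inv ≫ (u ▷ b) ≫ f) ?_ ?_ rfl
        · simp
        · simp [dayUnit]
      have h2 : dmk (F := dayUnit C) (G := G) (𝟙 (𝟙_ C)) y ((u ▷ b) ≫ f)
          = dmk u y f := by
        refine dmk_eq₂ u (𝟙 b) ?_ ?_ ?_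
        · simp
        · simp [dayUnit]
        · simp
      rw [← h1, h2]
  inv_hom_id := by
    ext c y
    show G.map ((λ_ c).inv ≫ (𝟙 (𝟙_ C) ▷ c) ≫ (λ_ c).hom) y = y
    simp

def dRightUnitorHom (F : C ⥤ Type) : dayTensor F (dayUnit C) ⟶ F where
  app c := TypeCat.ofHom (Quot.lift
    (fun w => F.map ((ρ_ w.pt.1).inv ≫ (w.pt.1 ◁ w.elt.2) ≫ w.arr) w.elt.1)
    (by
      rintro ⟨⟨a, b⟩, ⟨x, u⟩, f⟩ ⟨⟨a', b'⟩, ⟨x', u'⟩, f'⟩ ⟨⟨g₁, g₂⟩, he, ha⟩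
      obtain ⟨h1, h2⟩ := Prod.ext_iff.mp he
      clear he
      change F.map g₁ x = x' at h1
      change (dayUnit C).map g₂ u = u' at h2
      dsimp [pairProd, TypeCat.Fun.mk_apply] at g₁ g₂ h1 h2 ha ⊢
      rw [← h1, ← h2]
      change _ ⊗ _ ⟶ _ at f f'
      subst ha
      rw [← FunctorToTypes.map_comp_apply]
      congr 1
      dsimp [tensorBifunctor]
      rw [rightUnitor_inv_naturality_assoc]
      simp only [tensorHom_def', Category.assoc, ← whisker_exchange_assoc,
        MonoidalCategory.whiskerLeft_comp]))
  naturality c c' g := by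
    ext q
    induction q using dmk_ind with
    | h a b x u f =>
      show F.map ((ρ_ a).inv ≫ (a ◁ u) ≫ (f ≫ g)) x = F.map g (F.map ((ρ_ a).inv ≫ (a ◁ u) ≫ f) x)
      rw [← FunctorToTypes.map_comp_apply]
      congr 1
      simp

def dRightUnitorInv (F : C ⥤ Type) : F ⟶ dayTensor F (dayUnit C) where
  app c := TypeCat.ofHom fun x => dmk x (𝟙 (𝟙_ C)) (ρ_ c).hom
  naturality c c' g := by
    ext x
    show dmk (F := F) (G := dayUnit C) (F.map g x) (𝟙 (𝟙_ C)) (ρ_ c').hom = dmk (F := F) (G := dayUnit C) x (𝟙 (𝟙_ C)) ((ρ_ c).hom ≫ g)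
    refine (dmk_eq₂ g (𝟙 (𝟙_ C)) ?_ rfl ?_).symm
    · simp
    · simp [dayUnit]

def dRightUnitor (F : C ⥤ Type) : dayTensor F (dayUnit C) ≅ F where
  hom := dRightUnitorHom F
  inv := dRightUnitorInv F
  hom_inv_id := by
    ext c q
    induction q using dmk_ind with
    | h a b x u f =>
      show dmk (F := F) (G := dayUnit C) (F.map ((ρ_ a).inv ≫ (a ◁ u) ≫ f) x) (𝟙 (𝟙_ C)) (ρ_ c).hom = dmk x u f
      have h1 : dmk (F := F) (G := dayUnit C) x (𝟙 (𝟙_ C)) ((a ◁ u) ≫ f)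
          = dmk (F.map ((ρ_ a).inv ≫ (a ◁ u) ≫ f) x) (𝟙 (𝟙_ C)) (ρ_ c).hom := by
        refine dmk_eq₂ ((ρ_ a).inv ≫ (a ◁ u) ≫ f) (𝟙 (𝟙_ C)) ?_ rfl ?_
        · simp
        · simp [dayUnit]
      have h2 : dmk (F := F) (G := dayUnit C) x (𝟙 (𝟙_ C)) ((a ◁ u) ≫ f)
          = dmk x u f := by
        refine dmk_eq₂ (𝟙 a) u ?_ ?_ ?_
        · simp
        · simp
        · simp [dayUnit]
      rw [← h1, h2]
  inv_hom_id := by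
    ext c x
    show F.map ((ρ_ c).inv ≫ (c ◁ 𝟙 (𝟙_ C)) ≫ (ρ_ c).hom) x = x
    simp

theorem dmk_arr {F G : C ⥤ Type} {a b c : C} (x : F.obj a) (y : G.obj b)
    {f f' : a ⊗ b ⟶ c} (h : f = f') : dmk x y f = dmk x y f' := by rw [h]

def dAssocAux (F G H : C ⥤ Type) {p d c : C} (z : H.obj d) (warr : p ⊗ d ⟶ c) :
    (dayTensor F G).obj p → (dayTensor F (dayTensor G H)).obj c :=
  Quot.lift
    (fun v => dmk v.elt.1 (dmk v.elt.2 z (𝟙 (v.pt.2 ⊗ d)))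
      ((α_ v.pt.1 v.pt.2 d).inv ≫ (v.arr ⊗ₘ 𝟙 d) ≫ warr))
    (by
      rintro ⟨⟨a₀, a₁⟩, ⟨x, y⟩, e⟩ ⟨⟨a₀', a₁'⟩, ⟨x', y'⟩, e'⟩ ⟨⟨g₁, g₂⟩, he, ha⟩
      obtain ⟨h1, h2⟩ := Prod.ext_iff.mp he
      clear he
      change F.map g₁ x = x' at h1
      change G.map g₂ y = y' at h2
      dsimp [pairProd, tensorBifunctor, TypeCat.Fun.mk_apply] at g₁ g₂ h1 h2 ha ⊢
      rw [← h1, ← h2]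
      change _ ⊗ _ ⟶ _ at e e'
      subst ha
      refine dmk_eq₂ g₁ (g₂ ⊗ₘ 𝟙 d) ?_ rfl ?_
      · rw [associator_inv_naturality_assoc]
        simp only [tensorHom_comp_tensorHom_assoc, Category.comp_id, Category.id_comp, id_tensorHom_id]
      · rw [map_dmk]
        exact dmk_eq₂ g₂ (𝟙 d) (by simp) rfl (by simp))

def dAssocHom (F G H : C ⥤ Type) :
    dayTensor (dayTensor F G) H ⟶ dayTensor F (dayTensor G H) where
  app c := TypeCat.ofHom (Quot.lift (fun w => dAssocAux F G H w.elt.2 w.arr w.elt.1)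
    (by
      rintro ⟨⟨p, d⟩, ⟨q, z⟩, f⟩ ⟨⟨p', d'⟩, ⟨q', z'⟩, f'⟩ ⟨⟨g₁, g₂⟩, he, ha⟩
      obtain ⟨h1, h2⟩ := Prod.ext_iff.mp he
      clear he
      change (dayTensor F G).map g₁ q = q' at h1
      change H.map g₂ z = z' at h2
      dsimp [pairProd, tensorBifunctor, TypeCat.Fun.mk_apply] at g₁ g₂ h1 h2 ha ⊢
      rw [← h1, ← h2]
      change _ ⊗ _ ⟶ _ at f f'
      subst ha
      induction q using dmk_ind with
      | h a₀ a₁ x y e =>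
        rw [map_dmk]
        show dmk x (dmk y z (𝟙 (a₁ ⊗ d))) ((α_ a₀ a₁ d).inv ≫ (e ⊗ₘ 𝟙 d) ≫ ((g₁ ⊗ₘ g₂) ≫ f'))
          = dmk x (dmk y (H.map g₂ z) (𝟙 (a₁ ⊗ d'))) ((α_ a₀ a₁ d').inv ≫ ((e ≫ g₁) ⊗ₘ 𝟙 d') ≫ f')
        refine dmk_eq₂ (𝟙 a₀) (𝟙 a₁ ⊗ₘ g₂) ?_ (by simp) ?_
        · rw [associator_inv_naturality_assoc]
          simp only [tensorHom_comp_tensorHom_assoc, Category.comp_id, Category.id_comp, id_tensorHom_id]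
        · rw [map_dmk]
          exact dmk_eq₂ (𝟙 a₁) g₂ (by simp) (by simp) rfl))
  naturality c c' g := by
    ext q
    induction q using dmk_ind with
    | h p d qq z f =>
      induction qq using dmk_ind with
      | h a₀ a₁ x y e =>
        show dmk x (dmk y z (𝟙 (a₁ ⊗ d))) ((α_ a₀ a₁ d).inv ≫ (e ⊗ₘ 𝟙 d) ≫ (f ≫ g))
          = dmk x (dmk y z (𝟙 (a₁ ⊗ d))) (((α_ a₀ a₁ d).inv ≫ (e ⊗ₘ 𝟙 d) ≫ f) ≫ g)
        exact dmk_arr _ _ (by simp)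

@[simp] theorem dAssocHom_app_dmk {F G H : C ⥤ Type} {a b d p c : C}
    (x : F.obj a) (y : G.obj b) (z : H.obj d) (e : a ⊗ b ⟶ p) (f : p ⊗ d ⟶ c) :
    (dAssocHom F G H).app c (dmk (dmk x y e) z f)
      = dmk x (dmk y z (𝟙 (b ⊗ d))) ((α_ a b d).inv ≫ (e ⊗ₘ 𝟙 d) ≫ f) := rfl

def dAssocInvAux (F G H : C ⥤ Type) {a p c : C} (x : F.obj a) (warr : a ⊗ p ⟶ c) :
    (dayTensor G H).obj p → (dayTensor (dayTensor F G) H).obj c :=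
  Quot.lift
    (fun v => dmk (dmk x v.elt.1 (𝟙 (a ⊗ v.pt.1))) v.elt.2
      ((α_ a v.pt.1 v.pt.2).hom ≫ (𝟙 a ⊗ₘ v.arr) ≫ warr))
    (by
      rintro ⟨⟨b, d⟩, ⟨y, z⟩, e⟩ ⟨⟨b', d'⟩, ⟨y', z'⟩, e'⟩ ⟨⟨g₁, g₂⟩, he, ha⟩
      obtain ⟨h1, h2⟩ := Prod.ext_iff.mp he
      clear he
      change G.map g₁ y = y' at h1
      change H.map g₂ z = z' at h2
      dsimp [pairProd, tensorBifunctor, TypeCat.Fun.mk_apply] at g₁ g₂ h1 h2 ha ⊢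
      rw [← h1, ← h2]
      change _ ⊗ _ ⟶ _ at e e'
      subst ha
      refine dmk_eq₂ (𝟙 a ⊗ₘ g₁) g₂ ?_ ?_ rfl
      · rw [associator_naturality_assoc]
        simp only [tensorHom_comp_tensorHom_assoc, Category.comp_id, Category.id_comp, id_tensorHom_id]
      · rw [map_dmk]
        exact dmk_eq₂ (𝟙 a) g₁ (by simp) (by simp) rfl)

def dAssocInv (F G H : C ⥤ Type) :
    dayTensor F (dayTensor G H) ⟶ dayTensor (dayTensor F G) H where
  app c := TypeCat.ofHom (Quot.lift (fun w => dAssocInvAux F G H w.elt.1 w.arr w.elt.2)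
    (by
      rintro ⟨⟨a, p⟩, ⟨x, q⟩, f⟩ ⟨⟨a', p'⟩, ⟨x', q'⟩, f'⟩ ⟨⟨g₁, g₂⟩, he, ha⟩
      obtain ⟨h1, h2⟩ := Prod.ext_iff.mp he
      clear he
      change F.map g₁ x = x' at h1
      change (dayTensor G H).map g₂ q = q' at h2
      dsimp [pairProd, tensorBifunctor, TypeCat.Fun.mk_apply] at g₁ g₂ h1 h2 ha ⊢
      rw [← h1, ← h2]
      change _ ⊗ _ ⟶ _ at f f'
      subst ha
      induction q using dmk_ind with
      | h b d y z e =>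
        rw [map_dmk]
        show dmk (dmk x y (𝟙 (a ⊗ b))) z ((α_ a b d).hom ≫ (𝟙 a ⊗ₘ e) ≫ ((g₁ ⊗ₘ g₂) ≫ f'))
          = dmk (dmk (F.map g₁ x) y (𝟙 (a' ⊗ b))) z ((α_ a' b d).hom ≫ (𝟙 a' ⊗ₘ (e ≫ g₂)) ≫ f')
        refine dmk_eq₂ (g₁ ⊗ₘ 𝟙 b) (𝟙 d) ?_ ?_ (by simp)
        · rw [associator_naturality_assoc]
          simp only [tensorHom_comp_tensorHom_assoc, Category.comp_id, Category.id_comp, id_tensorHom_id]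
        · rw [map_dmk]
          exact dmk_eq₂ g₁ (𝟙 b) (by simp) rfl (by simp)))
  naturality c c' g := by
    ext q
    induction q using dmk_ind with
    | h a p x qq f =>
      induction qq using dmk_ind with
      | h b d y z e =>
        show dmk (dmk x y (𝟙 (a ⊗ b))) z ((α_ a b d).hom ≫ (𝟙 a ⊗ₘ e) ≫ (f ≫ g))
          = dmk (dmk x y (𝟙 (a ⊗ b))) z (((α_ a b d).hom ≫ (𝟙 a ⊗ₘ e) ≫ f) ≫ g)
        exact dmk_arr _ _ (by simp)

@[simp] theorem dAssocInv_app_dmk {F G H : C ⥤ Type} {a b d p c : C}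
    (x : F.obj a) (y : G.obj b) (z : H.obj d) (e : b ⊗ d ⟶ p) (f : a ⊗ p ⟶ c) :
    (dAssocInv F G H).app c (dmk x (dmk y z e) f)
      = dmk (dmk x y (𝟙 (a ⊗ b))) z ((α_ a b d).hom ≫ (𝟙 a ⊗ₘ e) ≫ f) := rfl

def dAssoc (F G H : C ⥤ Type) :
    dayTensor (dayTensor F G) H ≅ dayTensor F (dayTensor G H) where
  hom := dAssocHom F G H
  inv := dAssocInv F G H
  hom_inv_id := by
    ext c q
    induction q using dmk_ind with
    | h p d qq z f =>
      induction qq using dmk_ind with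
      | h a b x y e =>
        show dmk (dmk x y (𝟙 (a ⊗ b))) z
            ((α_ a b d).hom ≫ (𝟙 a ⊗ₘ 𝟙 (b ⊗ d)) ≫ ((α_ a b d).inv ≫ (e ⊗ₘ 𝟙 d) ≫ f))
          = dmk (dmk x y e) z f
        refine dmk_eq₂ e (𝟙 d) ?_ ?_ (by simp)
        · simp
        · rw [map_dmk]; exact dmk_arr _ _ (by simp)
  inv_hom_id := by
    ext c q
    induction q using dmk_ind with
    | h a p x qq f =>
      induction qq using dmk_ind with
      | h b d y z e =>
        show dmk x (dmk y z (𝟙 (b ⊗ d)))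
            ((α_ a b d).inv ≫ (𝟙 (a ⊗ b) ⊗ₘ 𝟙 d) ≫ ((α_ a b d).hom ≫ (𝟙 a ⊗ₘ e) ≫ f))
          = dmk x (dmk y z e) f
        refine dmk_eq₂ (𝟙 a) e ?_ (by simp) ?_
        · simp
        · rw [map_dmk]; exact dmk_arr _ _ (by simp)

def dayStruct (C : Type) [SmallCategory C] [MonoidalCategory C] :
    MonoidalCategoryStruct (C ⥤ Type) where
  tensorObj := dayTensor
  whiskerLeft F _ _ f := dHom (𝟙 F) f
  whiskerRight f G := dHom f (𝟙 G)
  tensorHom := dHom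
  tensorUnit := dayUnit C
  associator := dAssoc
  leftUnitor := dLeftUnitor
  rightUnitor := dRightUnitor

def dayMonoidal (C : Type) [SmallCategory C] [MonoidalCategory C] :
    MonoidalCategory (C ⥤ Type) :=
  letI : MonoidalCategoryStruct (C ⥤ Type) := dayStruct C
  MonoidalCategory.ofTensorHom
    (id_tensorHom_id := dHom_id)
    (id_tensorHom := fun _ {_ _} _ => rfl)
    (tensorHom_id := fun {_ _} _ _ => rfl)
    (tensorHom_comp_tensorHom := fun f₁ f₂ g₁ g₂ => (dHom_comp f₁ g₁ f₂ g₂).symm)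
    (associator_naturality := by
      intro F₁ F₂ F₃ G₁ G₂ G₃ η ε δ
      ext c q
      induction q using dmk_ind with
      | h p d qq z f =>
        induction qq using dmk_ind with
        | h a b x y e => rfl)
    (leftUnitor_naturality := by
      intro G G' η
      ext c q
      induction q using dmk_ind with
      | h a b u y f =>
        show G'.map ((λ_ b).inv ≫ (u ▷ b) ≫ f) (η.app b y)
          = η.app c (G.map ((λ_ b).inv ≫ (u ▷ b) ≫ f) y)
        exact (NatTrans.naturality_apply η _ y).symm)
    (rightUnitor_naturality := by
      intro F F' η
      ext c q
      induction q using dmk_ind with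
      | h a b x u f =>
        show F'.map ((ρ_ a).inv ≫ (a ◁ u) ≫ f) (η.app a x)
          = η.app c (F.map ((ρ_ a).inv ≫ (a ◁ u) ≫ f) x)
        exact (NatTrans.naturality_apply η _ x).symm)
    (pentagon := by
      intro F G H K
      ext c q
      induction q using dmk_ind with
      | h q₀ v qqq w h' =>
        induction qqq using dmk_ind with
        | h p u qq z g =>
          induction qq using dmk_ind with
          | h a b x y e =>
            show dmk x
                (dmk y (dmk z w (𝟙 (u ⊗ v)))
                  ((α_ b u v).inv ≫ (𝟙 (b ⊗ u) ⊗ₘ 𝟙 v) ≫ 𝟙 ((b ⊗ u) ⊗ v)))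
                ((α_ a (b ⊗ u) v).inv ≫
                  (((α_ a b u).inv ≫ (e ⊗ₘ 𝟙 u) ≫ g) ⊗ₘ 𝟙 v) ≫ h')
              = dmk x (dmk y (dmk z w (𝟙 (u ⊗ v))) (𝟙 (b ⊗ (u ⊗ v))))
                ((α_ a b (u ⊗ v)).inv ≫ (e ⊗ₘ 𝟙 (u ⊗ v)) ≫
                  ((α_ p u v).inv ≫ (g ⊗ₘ 𝟙 v) ≫ h'))
            refine (dmk_eq₂ (𝟙 a) (α_ b u v).inv ?_ (by simp) ?_).symm
            · simp only [Category.assoc, id_tensorHom, tensorHom_id, comp_whiskerRight]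
              rw [pentagon_inv_assoc, ← associator_inv_naturality_left_assoc]
            · rw [map_dmk]
              exact dmk_arr _ _ (by simp))
    (triangle := by
      intro F G
      ext c q
      induction q using dmk_ind with
      | h p d qq y g =>
        induction qq using dmk_ind with
        | h a b x u' e =>
          show dmk x (G.map ((λ_ d).inv ≫ (u' ▷ d) ≫ 𝟙 (b ⊗ d)) y)
              ((α_ a b d).inv ≫ (e ⊗ₘ 𝟙 d) ≫ g)
            = dmk (F.map ((ρ_ a).inv ≫ (a ◁ u') ≫ e) x) y g
          have h1 : dmk (F := F) (G := G) x y
              ((𝟙 a ⊗ₘ ((λ_ d).inv ≫ (u' ▷ d) ≫ 𝟙 (b ⊗ d))) ≫ ((α_ a b d).inv ≫ (e ⊗ₘ 𝟙 d) ≫ g))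
              = dmk x (G.map ((λ_ d).inv ≫ (u' ▷ d) ≫ 𝟙 (b ⊗ d)) y)
                ((α_ a b d).inv ≫ (e ⊗ₘ 𝟙 d) ≫ g) :=
            dmk_eq₂ (𝟙 a) _ rfl (by simp) rfl
          have h2 : dmk (F := F) (G := G) x y
              ((((ρ_ a).inv ≫ (a ◁ u') ≫ e) ⊗ₘ 𝟙 d) ≫ g)
              = dmk (F.map ((ρ_ a).inv ≫ (a ◁ u') ≫ e) x) y g :=
            dmk_eq₂ _ (𝟙 d) rfl rfl (by simp)
          rw [← h1, ← h2]
          refine dmk_arr _ _ ?_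
          simp only [Category.comp_id, id_tensorHom, tensorHom_id, comp_tensor_id,
            MonoidalCategory.whiskerLeft_comp, Category.assoc, comp_whiskerRight]
          erw [associator_inv_naturality_middle_assoc, triangle_assoc_comp_left_inv_assoc])

end DayProofAux

/-- Day convolution makes the copresheaf category `[C ⥤ Type]` into a monoidal
category, with tensor the Day convolution and unit the representable
`Hom_C(I, -)`. -/
theorem day_convolution_monoidal (C : Type) [SmallCategory C]
    [MonoidalCategory C] :
    ∃ M : MonoidalCategory (C ⥤ Type),
      (∀ F G : C ⥤ Type,
        Nonempty ((@MonoidalCategoryStruct.tensorObj _ _ M.toMonoidalCategoryStruct F G) ≅ dayTensor F G)) ∧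
      Nonempty ((@MonoidalCategoryStruct.tensorUnit _ _ M.toMonoidalCategoryStruct) ≅
        coyoneda.obj (op (𝟙_ C))) := by
  refine ⟨DayProofAux.dayMonoidal C, fun F G => ⟨eqToIso rfl⟩, ⟨eqToIso rfl⟩⟩
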